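/- Let n ≥ 1 and let 𝔤₀ = 𝔨 ⊕ 𝔭₀ = { [[A, b], [0, 0]] : A an n×n skew-symmetric matrix, b ∈ ℝⁿ } ⊆ gl(n+1, ℝ). If a = [[U, v], [wᵀ, x]] ∈ GL(n+1, ℝ) satisfies a·Z·a⁻¹ ∈ 𝔤₀ for every Z ∈ 𝔤₀, then w = 0, i.e. a is block upper triangular: a = [[U, v], [0, x]]. -/

import Mathlib

open Matrix

noncomputable section

abbrev Idx (n : ℕ) := Fin n ⊕ Unit

/-- 𝔤₀ = 𝔨 ⊕ 𝔭₀ = { [[A,b],[0,0]] : A skew-symmetric, b ∈ ℝⁿ } -/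
def g0Set (n : ℕ) : Set (Matrix (Idx n) (Idx n) ℝ) :=
  { m | ∃ (A : Matrix (Fin n) (Fin n) ℝ) (b : Fin n → ℝ),
      Aᵀ = -A ∧ m = fromBlocks A (replicateCol Unit b) 0 0 }

theorem stmt7 (n : ℕ) (hn : 1 ≤ n) (a : (Matrix (Idx n) (Idx n) ℝ)ˣ)
    (ha : ∀ Z ∈ g0Set n,
      (a : Matrix (Idx n) (Idx n) ℝ) * Z * ((a⁻¹ : _ˣ) : Matrix (Idx n) (Idx n) ℝ)
        ∈ g0Set n) :
    ∀ j : Fin n, (a : Matrix (Idx n) (Idx n) ℝ) (Sum.inr ()) (Sum.inl j) = 0 := by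
  intro j
  set Z : Matrix (Idx n) (Idx n) ℝ :=
    fromBlocks 0 (replicateCol Unit (Pi.single j 1)) 0 0 with hZ
  have hZmem : Z ∈ g0Set n := ⟨0, Pi.single j 1, by simp, rfl⟩
  obtain ⟨A', b', -, hM⟩ := ha Z hZmem
  have key : (a : Matrix (Idx n) (Idx n) ℝ) * Z
      = ((a : Matrix (Idx n) (Idx n) ℝ) * Z * ((a⁻¹ : _ˣ) : Matrix (Idx n) (Idx n) ℝ))
        * (a : Matrix (Idx n) (Idx n) ℝ) := by
    rw [mul_assoc, ← Units.val_mul, inv_mul_cancel, Units.val_one, mul_one]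
  have h1 : ((a : Matrix (Idx n) (Idx n) ℝ) * Z) (Sum.inr ()) (Sum.inr ())
      = (a : Matrix (Idx n) (Idx n) ℝ) (Sum.inr ()) (Sum.inl j) := by
    simp [mul_apply, hZ, Fintype.sum_sum_type, fromBlocks, replicateCol, Pi.single_apply,
      mul_ite, Finset.sum_ite_eq']
  have h2 : ((a : Matrix (Idx n) (Idx n) ℝ) * Z) (Sum.inr ()) (Sum.inr ()) = 0 := by
    rw [key, hM]
    simp [mul_apply, Fintype.sum_sum_type, fromBlocks]
  rw [h1] at h2
  exact h2
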